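/- Let M = I ×_{b₁}F₁ ×⋯× _{b_m}F_m be a multiply warped product with P = ∂/∂t and quarter-symmetric connection ∇̄. If (M,∇̄) has constant scalar curvature S̄, then each fiber (F_i,∇^{F_i}) has constant scalar curvature S^{F_i}. -/

import Mathlib

open Set

/-- Theorem 4.13: if the multiply warped product
`M = I ×_{b₁}F₁ ×⋯×_{b_m}F_m` (metric `−dt² ⊕ b₁²g_{F₁} ⊕⋯⊕ b_m²g_{F_m}`,
`P = ∂/∂t`, quarter-symmetric connection `∇̄`) has constant scalar curvature `S̄`, then
each fiber `(F_i,∇^{F_i})` has constant scalar curvature `S^{F_i}`.  Analytic model: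
`Q i` is the (nonempty) set of points of `F_i`, `SF i : Q i → ℝ` its scalar curvature,
and by Proposition 4.9 (equation (38)) the scalar curvature of `∇̄` at
`(t, q₁, …, q_m)` is given by the displayed formula `hSbar`. -/
theorem multiply_warped_constant_scalar_implies_fibers_constant
    (m : ℕ) (hm : 0 < m)
    (l : Fin m → ℕ) (hl : ∀ i, 0 < l i)
    (l1 l2 : ℝ) (hl1 : l1 ≠ 0) (hl2 : l2 ≠ 0)
    (a c : ℝ) (hac : a < c)
    (b : Fin m → ℝ → ℝ) (hbpos : ∀ i, ∀ t ∈ Ioo a c, 0 < b i t)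
    (hb : ∀ i, ContDiffOn ℝ 2 (b i) (Ioo a c))
    (nbar : ℕ) (hnbar : nbar = 1 + ∑ i, l i)
    (Q : Fin m → Type*) [∀ i, Nonempty (Q i)]
    (SF : ∀ i, Q i → ℝ)
    (Sbar : ℝ → (∀ i, Q i) → ℝ)
    (hSbar : ∀ t ∈ Ioo a c, ∀ q : ∀ i, Q i, Sbar t q =
      -2 * ∑ i, (l i : ℝ) * deriv (deriv (b i)) t / b i t
      + ∑ i, SF i (q i) / (b i t) ^ 2
      - ∑ i, (l i : ℝ) * ((l i : ℝ) - 1) * (deriv (b i) t) ^ 2 / (b i t) ^ 2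
      - ∑ i, ∑ s ∈ Finset.univ.erase i,
          (l i : ℝ) * (l s : ℝ) * deriv (b i) t * deriv (b s) t / (b i t * b s t)
      + ∑ i, (l i : ℝ) * (((nbar : ℝ) - 1) * l1 + (l i : ℝ) * l2)
          * deriv (b i) t / b i t
      + l2 * ∑ i, ∑ s ∈ Finset.univ.erase i,
          (l i : ℝ) * (l s : ℝ) * deriv (b s) t / b s t
      - ∑ i, (l i : ℝ) * ((nbar : ℝ) * l1 * l2 - (l1 ^ 2 + l2 ^ 2)))
    (Sb : ℝ)
    (hconst : ∀ t ∈ Ioo a c, ∀ q : ∀ i, Q i, Sbar t q = Sb) :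
    ∀ i, ∃ ci : ℝ, ∀ x : Q i, SF i x = ci := by
  intro i
  classical
  set t : ℝ := (a + c) / 2 with ht
  have htmem : t ∈ Ioo a c := ⟨by linarith, by linarith⟩
  have hb2 : (0:ℝ) < (b i t) ^ 2 := pow_pos (hbpos i t htmem) 2
  obtain ⟨q₀⟩ : Nonempty (∀ j, Q j) := ⟨fun j => Classical.arbitrary _⟩
  refine ⟨SF i (q₀ i), fun x => ?_⟩
  set q : ∀ j, Q j := Function.update q₀ i x with hq
  have h1 := (hSbar t htmem q).symm.trans (hconst t htmem q)
  have h2 := (hSbar t htmem q₀).symm.trans (hconst t htmem q₀)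
  have hsum : ∑ j, SF j (q j) / (b j t) ^ 2 = ∑ j, SF j (q₀ j) / (b j t) ^ 2 := by
    linarith
  have hrest : ∀ j ∈ Finset.univ.erase i,
      SF j (q j) / (b j t) ^ 2 = SF j (q₀ j) / (b j t) ^ 2 := by
    intro j hj
    have hji : j ≠ i := Finset.ne_of_mem_erase hj
    simp [hq, Function.update_of_ne hji]
  have hi : SF i (q i) / (b i t) ^ 2 = SF i (q₀ i) / (b i t) ^ 2 := by
    have hmem : i ∈ Finset.univ := Finset.mem_univ i
    rw [← Finset.add_sum_erase _ _ hmem, ← Finset.add_sum_erase _ _ hmem,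
      Finset.sum_congr rfl hrest] at hsum
    linarith
  have hqi : q i = x := by simp [hq]
  rw [hqi] at hi
  rw [div_left_inj' (ne_of_gt hb2)] at hi; linarith
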